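/- Let v, w ∈ ℤ² be primitive integer vectors (the two coordinates of v are coprime, and likewise for w) with d = |det(v, w)| ≠ 0, and let x, y ∈ ℝ². Then the set of points of the 2-torus T² = (ℝ/ℤ)² that lie both in the image of the line {x + s v : s ∈ ℝ} and in the image of the line {y + t w : t ∈ ℝ} under the quotient map ℝ² → (ℝ/ℤ)² is finite and has exactly d elements. -/
import Mathlib

private lemma addCircle_coe_eq_coe (r r' : ℝ) :
    (r : AddCircle (1:ℝ)) = (r' : AddCircle (1:ℝ)) ↔ ∃ n : ℤ, r - r' = n := by
  rw [QuotientAddGroup.eq_iff_sub_mem, AddSubgroup.mem_zmultiples_iff]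
  constructor
  · rintro ⟨n, hn⟩; exact ⟨n, by simpa using hn.symm⟩
  · rintro ⟨n, hn⟩; exact ⟨n, by simp [hn]⟩

private lemma prim_int (u0 u1 : ℤ) (hu : IsCoprime u0 u1) (r : ℝ)
    (h0 : ∃ n : ℤ, r * u0 = n) (h1 : ∃ n : ℤ, r * u1 = n) :
    ∃ k : ℤ, r = k := by
  obtain ⟨a, b, hab⟩ := hu
  obtain ⟨n0, e0⟩ := h0
  obtain ⟨n1, e1⟩ := h1
  refine ⟨a * n0 + b * n1, ?_⟩
  have habR : (a:ℝ) * u0 + (b:ℝ) * u1 = 1 := by exact_mod_cast congrArg (Int.cast : ℤ → ℝ) hab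
  push_cast
  linear_combination (a:ℝ) * e0 + (b:ℝ) * e1 - r * habR

/-- Two straight lines in `ℝ²` with primitive integer direction vectors `v, w`
with `d = |det(v, w)| ≠ 0` project, under the quotient map `ℝ² → (ℝ/ℤ)²`, to
closed curves on the 2-torus whose intersection is a finite set with exactly
`d` elements. -/
theorem torus_geodesics_intersection_card
    (v w : Fin 2 → ℤ)
    (hv : IsCoprime (v 0) (v 1)) (hw : IsCoprime (w 0) (w 1))
    (d : ℕ) (hd : (d : ℤ) = |v 0 * w 1 - v 1 * w 0|) (hd0 : d ≠ 0)
    (x y : Fin 2 → ℝ) :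
    let q : (Fin 2 → ℝ) → (Fin 2 → AddCircle (1 : ℝ)) := fun p i => (p i : AddCircle (1 : ℝ))
    let S : Set (Fin 2 → AddCircle (1 : ℝ)) :=
      (q '' {p : Fin 2 → ℝ | ∃ s : ℝ, p = x + s • fun i => (v i : ℝ)}) ∩
        (q '' {p : Fin 2 → ℝ | ∃ t : ℝ, p = y + t • fun i => (w i : ℝ)})
    S.Finite ∧ S.ncard = d := by
  classical
  intro q S
  obtain ⟨aw, bw, habw⟩ := hw
  set D : ℤ := v 0 * w 1 - v 1 * w 0 with hD
  have hDne : D ≠ 0 := by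
    intro h
    rw [h, abs_zero] at hd
    exact hd0 (by exact_mod_cast hd)
  have hdpos : 0 < (d:ℤ) := by rw [hd]; exact abs_pos.mpr hDne
  have hDr : (D:ℝ) ≠ 0 := Int.cast_ne_zero.mpr hDne
  have habwR : (aw:ℝ) * w 0 + (bw:ℝ) * w 1 = 1 := by
    exact_mod_cast congrArg (Int.cast : ℤ → ℝ) habw
  have hDR : (D:ℝ) = (v 0:ℝ) * (w 1:ℝ) - (v 1:ℝ) * (w 0:ℝ) := by
    rw [hD]; push_cast; ring
  set num : ℝ := (y 0 - x 0) * (w 1 : ℝ) - (y 1 - x 1) * (w 0 : ℝ) with hnum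
  set s : ℤ → ℝ := fun m => (num + m) / (D:ℝ) with hs
  set t : ℤ → ℝ := fun m =>
    ((v 1 : ℝ) * (y 0 - x 0 + m * bw) - (v 0 : ℝ) * (y 1 - x 1 - m * aw)) / (D:ℝ) with ht
  set P : ℤ → (Fin 2 → AddCircle (1:ℝ)) := fun m => q (x + s m • fun i => (v i : ℝ)) with hP
  have qeq : ∀ p p' : Fin 2 → ℝ, q p = q p' ↔ ∀ i, ∃ n : ℤ, p i - p' i = n := by
    intro p p'
    constructor
    · intro h i
      exact (addCircle_coe_eq_coe _ _).mp (congrFun h i)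
    · intro h
      funext i
      exact (addCircle_coe_eq_coe _ _).mpr (h i)
  have key : ∀ m : ℤ, q (x + s m • fun i => (v i : ℝ)) = q (y + t m • fun i => (w i : ℝ)) := by
    intro m
    rw [qeq]
    intro i
    fin_cases i
    · refine ⟨m * bw, ?_⟩
      simp only [Pi.add_apply, Pi.smul_apply, smul_eq_mul, hs, ht, hnum]
      push_cast
      field_simp
      linear_combination (x 0 - y 0 - (m:ℝ)*bw) * hDR - (m:ℝ)*(v 0:ℝ) * habwR
    · refine ⟨-(m * aw), ?_⟩
      simp only [Pi.add_apply, Pi.smul_apply, smul_eq_mul, hs, ht, hnum]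
      push_cast
      field_simp
      linear_combination (x 1 - y 1 + (m:ℝ)*aw) * hDR - (m:ℝ)*(v 1:ℝ) * habwR
  have Pcong : ∀ m m' : ℤ, D ∣ (m - m') → P m = P m' := by
    rintro m m' ⟨k, hk⟩
    simp only [hP]
    rw [qeq]
    intro i
    refine ⟨k * v i, ?_⟩
    simp only [Pi.add_apply, Pi.smul_apply, smul_eq_mul, hs]
    have hkR : (m : ℝ) - m' = D * k := by exact_mod_cast congrArg (Int.cast : ℤ → ℝ) hk
    push_cast
    field_simp
    linear_combination (v i : ℝ) * hkR
  set F : Finset (Fin 2 → AddCircle (1:ℝ)) := (Finset.Ico (0:ℤ) (d:ℤ)).image P with hF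
  have hSF : S = ↑F := by
    ext p
    simp only [hF, Finset.coe_image, Set.mem_image, Finset.mem_coe, Finset.mem_Ico,
      Set.mem_inter_iff, Set.mem_setOf_eq]
    constructor
    · rintro ⟨⟨p1, ⟨s1, rfl⟩, rfl⟩, ⟨p2, ⟨t1, rfl⟩, hq⟩⟩
      rw [qeq] at hq
      obtain ⟨n0, hn0⟩ := hq 0
      obtain ⟨n1, hn1⟩ := hq 1
      simp only [Pi.add_apply, Pi.smul_apply, smul_eq_mul] at hn0 hn1
      set m0 : ℤ := n1 * w 0 - n0 * w 1 with hm0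
      have hs1 : s1 = s m0 := by
        simp only [hs, hnum, hm0]
        push_cast
        field_simp
        linear_combination (-(w 1:ℝ)) * hn0 + (w 0:ℝ) * hn1 + s1 * hDR
      refine ⟨m0 % (d:ℤ), ⟨Int.emod_nonneg _ (by positivity), Int.emod_lt_of_pos _ hdpos⟩, ?_⟩
      have hPm : P (m0 % (d:ℤ)) = P m0 := by
        apply Pcong
        have hmee : m0 % (d:ℤ) ≡ m0 [ZMOD (d:ℤ)] := Int.emod_emod_of_dvd m0 dvd_rfl
        have h1 : (d:ℤ) ∣ m0 % (d:ℤ) - m0 := dvd_sub_comm.mp hmee.dvd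
        have h2 : |D| ∣ m0 % (d:ℤ) - m0 := by rw [← hd]; exact h1
        exact (abs_dvd _ _).mp h2
      rw [hPm]
      simp only [hP, ← hs1]
    · rintro ⟨m, _, rfl⟩
      constructor
      · exact ⟨_, ⟨s m, rfl⟩, rfl⟩
      · exact ⟨_, ⟨t m, rfl⟩, (key m).symm⟩
  have hinj : Set.InjOn P ↑(Finset.Ico (0:ℤ) (d:ℤ)) := by
    intro m hm m' hm' hPP
    simp only [Finset.coe_Ico, Set.mem_Ico] at hm hm'
    have h := (qeq _ _).mp hPP
    have hr : ∃ k : ℤ, ((m:ℝ) - m') / D = k := by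
      apply prim_int (v 0) (v 1) hv
      · obtain ⟨n, hn⟩ := h 0
        refine ⟨n, ?_⟩
        simp only [Pi.add_apply, Pi.smul_apply, smul_eq_mul, hs] at hn
        field_simp at hn ⊢
        linear_combination hn
      · obtain ⟨n, hn⟩ := h 1
        refine ⟨n, ?_⟩
        simp only [Pi.add_apply, Pi.smul_apply, smul_eq_mul, hs] at hn
        field_simp at hn ⊢
        linear_combination hn
    obtain ⟨k, hk⟩ := hr
    have hk' : m - m' = k * D := by
      have hR : (m:ℝ) - m' = k * D := by
        field_simp at hk
        linear_combination hk
      exact_mod_cast hR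
    have hdvd : (d:ℤ) ∣ (m - m') := by
      rw [hd, hk']
      exact (abs_dvd _ _).mpr (dvd_mul_left D k)
    have hz : m - m' = 0 := Int.eq_zero_of_abs_lt_dvd hdvd (abs_lt.mpr ⟨by omega, by omega⟩)
    omega
  constructor
  · rw [hSF]; exact F.finite_toSet
  · rw [hSF, Set.ncard_coe_finset, hF, Finset.card_image_of_injOn hinj]
    simp
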